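/- For the addition block with constant inputs p⁺, p⁻, i⁺, i⁻ ≥ 0, any nonnegative equilibrium (b⁺, b⁻) of ∂t x_{B+} = s·(p⁺ + i⁺) − s·x_{B+} − q·x_{B+}·x_{B−}, ∂t x_{B−} = s·(p⁻ + i⁻) − s·x_{B−} − q·x_{B+}·x_{B−} satisfies b⁺ − b⁻ = (p⁺ − p⁻) + (i⁺ − i⁻); moreover this equilibrium exists and is unique in ℝ≥0². -/
import Mathlib


/-- The addition block: any nonnegative equilibrium encodes the sum of the two
dual-rail inputs, and such an equilibrium exists and is unique. -/
theorem addition_block_equilibrium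
    (s q pp pm ip im : ℝ)
    (hs : 0 < s) (hq : 0 < q)
    (hpp : 0 ≤ pp) (hpm : 0 ≤ pm) (hip : 0 ≤ ip) (him : 0 ≤ im) :
    (∀ bp bm : ℝ, 0 ≤ bp → 0 ≤ bm →
      s * (pp + ip) - s * bp - q * bp * bm = 0 →
      s * (pm + im) - s * bm - q * bp * bm = 0 →
      bp - bm = (pp - pm) + (ip - im)) ∧
    (∃! b : ℝ × ℝ, 0 ≤ b.1 ∧ 0 ≤ b.2 ∧
      s * (pp + ip) - s * b.1 - q * b.1 * b.2 = 0 ∧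
      s * (pm + im) - s * b.2 - q * b.1 * b.2 = 0) := by
  set A : ℝ := pp + ip with hAdef
  set B : ℝ := pm + im with hBdef
  have hA : 0 ≤ A := by positivity
  have hB : 0 ≤ B := by positivity
  set d : ℝ := A - B with hddef
  -- a helper for the first part
  have part1 : ∀ bp bm : ℝ, 0 ≤ bp → 0 ≤ bm →
      s * A - s * bp - q * bp * bm = 0 →
      s * B - s * bm - q * bp * bm = 0 →
      bp - bm = (pp - pm) + (ip - im) := by
    intro bp bm _ _ h1 h2
    have h3 : s * (bp - bm) = s * (A - B) := by linear_combination h2 - h1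
    have h4 : bp - bm = A - B := mul_left_cancel₀ hs.ne' h3
    simp only [hAdef, hBdef] at h4
    linarith
  set Δ : ℝ := (s - q * d) ^ 2 + 4 * q * s * A with hΔdef
  have hΔ' : Δ = (s + q * d) ^ 2 + 4 * q * s * B := by
    simp only [hΔdef, hddef]; ring
  have hΔ0 : 0 ≤ Δ := by positivity
  set r : ℝ := Real.sqrt Δ with hrdef
  have hr2 : r ^ 2 = Δ := Real.sq_sqrt hΔ0
  have hr0 : 0 ≤ r := Real.sqrt_nonneg _
  have hr1 : s - q * d ≤ r := by
    have : |s - q * d| ≤ r := by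
      rw [hrdef, ← Real.sqrt_sq_eq_abs]
      apply Real.sqrt_le_sqrt
      nlinarith [mul_nonneg (mul_nonneg hq.le hs.le) hA]
    exact le_trans (le_abs_self _) this
  have hr1' : s + q * d ≤ r := by
    have : |s + q * d| ≤ r := by
      rw [hrdef, ← Real.sqrt_sq_eq_abs]
      apply Real.sqrt_le_sqrt
      nlinarith [mul_nonneg (mul_nonneg hq.le hs.le) hB]
    exact le_trans (le_abs_self _) this
  set bp : ℝ := (-(s - q * d) + r) / (2 * q) with hbpdef
  set bm : ℝ := (-(s + q * d) + r) / (2 * q) with hbmdef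
  have h2q : (0:ℝ) < 2 * q := by linarith
  have hbp0 : 0 ≤ bp := by
    apply div_nonneg _ h2q.le; linarith
  have hbm0 : 0 ≤ bm := by
    apply div_nonneg _ h2q.le; linarith
  have hdiff : bp - bm = d := by
    rw [hbpdef, hbmdef]
    field_simp
    ring
  have hr2a : r ^ 2 = (s - q * d) ^ 2 + 4 * q * s * A := by rw [hr2, hΔdef]
  have hr2b : r ^ 2 = (s + q * d) ^ 2 + 4 * q * s * B := by rw [hr2, hΔ']
  have hq0 : q ≠ 0 := hq.ne'
  have ebp : 2 * q * bp = -(s - q * d) + r := by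
    rw [hbpdef]; field_simp
  have ebm : 2 * q * bm = -(s + q * d) + r := by
    rw [hbmdef]; field_simp
  have h4q : (4 : ℝ) * q ^ 2 ≠ 0 := by positivity
  have heq1 : s * A - s * bp - q * bp * bm = 0 := by
    have key : 4 * q ^ 2 * (s * A - s * bp - q * bp * bm) = 0 := by
      linear_combination (-2 * q * s - 2 * q ^ 2 * bm) * ebp
        + (-q * (-(s - q * d) + r)) * ebm + (-q) * hr2a
    exact (mul_eq_zero.mp key).resolve_left h4q
  have heq2 : s * B - s * bm - q * bp * bm = 0 := by
    have key : 4 * q ^ 2 * (s * B - s * bm - q * bp * bm) = 0 := by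
      linear_combination (-2 * q ^ 2 * bm) * ebp
        + (-2 * q * s - q * (-(s - q * d) + r)) * ebm + (-q) * hr2b
    exact (mul_eq_zero.mp key).resolve_left h4q
  constructor
  · exact part1
  · refine ⟨(bp, bm), ⟨hbp0, hbm0, heq1, heq2⟩, ?_⟩
    rintro ⟨x, y⟩ ⟨hx, hy, e1, e2⟩
    simp only at hx hy e1 e2
    have hxy : x - y = d := by
      have := part1 x y hx hy e1 e2
      simp only [hddef, hAdef, hBdef]; linarith
    have hxbp : x = bp := by
      have hfac : (x - bp) * (s + q * (x + bp) - q * d) = 0 := by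
        have hy' : y = x - d := by linarith
        have hbm' : bm = bp - d := by linarith
        rw [hy'] at e1
        rw [hbm'] at heq1
        linear_combination heq1 - e1
      have hpos : 0 < s + q * (x + bp) - q * d := by
        have h1 : 0 ≤ q * (x - d) := by
          apply mul_nonneg hq.le; linarith
        nlinarith [mul_nonneg hq.le hbp0]
      have := (mul_eq_zero.mp hfac).resolve_right hpos.ne'
      linarith
    have hybm : y = bm := by linarith
    simp [Prod.ext_iff, hxbp, hybm]
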